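/- There is an explicit bijection between the set of words of length n over the alphabet {1,…,m} and the disjoint union over λ ⊆ (n^m) of the sets ST(λ, n) of strict tableaux of shape λ with filling [n]. -/

import Mathlib

open scoped BigOperators

/-- A plane partition: a finitely supported `ℕ`-array (0-indexed) weakly
decreasing along rows and columns. -/
structure PlanePartition where
  entry : ℕ → ℕ → ℕ
  row_decr : ∀ i j, entry i (j + 1) ≤ entry i j
  col_decr : ∀ i j, entry (i + 1) j ≤ entry i j
  finite_support : {p : ℕ × ℕ | entry p.1 p.2 ≠ 0}.Finite

namespace PlanePartition

/-- `π` has at most `n` (nonzero) rows. -/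
def RowsLE (π : PlanePartition) (n : ℕ) : Prop := ∀ i j, n ≤ i → π.entry i j = 0

/-- `π` has at most `k` (nonzero) columns. -/
def ColsLE (π : PlanePartition) (k : ℕ) : Prop := ∀ i j, k ≤ j → π.entry i j = 0

/-- all entries of `π` are at most `m`. -/
def EntriesLE (π : PlanePartition) (m : ℕ) : Prop := ∀ i j, π.entry i j ≤ m

/-- The descent set of `π` (0-indexed cells). -/
def Des (π : PlanePartition) : Set (ℕ × ℕ) :=
  {p | π.entry (p.1 + 1) p.2 < π.entry p.1 p.2}

/-- number of descents of `π`. -/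
noncomputable def des (π : PlanePartition) : ℕ := π.Des.ncard

/-- `dmat π i ℓ` is the matrix entry `d_{i+1, ℓ+1}` of `Φ(π)`: the number of columns `j`
with `π_{ij} = ℓ+1 > π_{i+1,j}` (here `i`, `ℓ` are 0-indexed). -/
noncomputable def dmat (π : PlanePartition) (i ℓ : ℕ) : ℕ :=
  {j : ℕ | π.entry i j = ℓ + 1 ∧ π.entry (i + 1) j ≤ ℓ}.ncard

/-- the volume `|π|`. -/
noncomputable def vol (π : PlanePartition) : ℕ := ∑ᶠ p : ℕ × ℕ, π.entry p.1 p.2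

/-- the up-hook volume `|π|_{uh} = Σ_{(i,j) ∈ Des(π)} (π_{ij} + i - 1)` (1-indexed `i`;
in our 0-indexed convention the summand is `π.entry p.1 p.2 + p.1`). -/
noncomputable def uhvol (π : PlanePartition) : ℕ :=
  ∑ᶠ p ∈ π.Des, (π.entry p.1 p.2 + p.1)

/-- the corner volume `|π|_c = Σ_{(i,j) ∈ Des(π)} π_{ij}`. -/
noncomputable def cvol (π : PlanePartition) : ℕ :=
  ∑ᶠ p ∈ π.Des, π.entry p.1 p.2

/-- the trace `tr(π) = Σ_i π_{ii}`. -/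
noncomputable def trace (π : PlanePartition) : ℕ := ∑ᶠ i : ℕ, π.entry i i

/-- `colCount π v` is the number of columns of `π` containing the entry `v`. -/
noncomputable def colCount (π : PlanePartition) (v : ℕ) : ℕ :=
  {j : ℕ | ∃ i, π.entry i j = v}.ncard

/-- the length of row `i` (0-indexed) of `π`. -/
noncomputable def rowLen (π : PlanePartition) (i : ℕ) : ℕ :=
  {j : ℕ | π.entry i j ≠ 0}.ncard

/-- `π` is column-strict: entries strictly decrease down the columns (within the shape). -/
def ColStrict (π : PlanePartition) : Prop :=
  ∀ i j, π.entry i j ≠ 0 → π.entry (i + 1) j < π.entry i j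

/-- the shape of `π` is exactly the rectangle with `n` rows and `k` columns. -/
def ShapeRect (π : PlanePartition) (k n : ℕ) : Prop :=
  ∀ i j, π.entry i j ≠ 0 ↔ i < n ∧ j < k

end PlanePartition

/-- The Schur polynomial `s_{(k^n)}` of rectangular shape `(k^n)` in `N` variables
`x 0, …, x (N-1)`, defined via column-strict plane partitions of shape `(k^n)` with
entries at most `N`; the variable `x i` records entries equal to `i + 1`. -/
noncomputable def schurRect {R : Type*} [CommSemiring R] (k n N : ℕ) (x : ℕ → R) : R :=
  ∑ᶠ π ∈ {π : PlanePartition | π.ColStrict ∧ π.ShapeRect k n ∧ π.EntriesLE N},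
    ∏ i ∈ Finset.range N, x i ^ ({p : ℕ × ℕ | π.entry p.1 p.2 = i + 1}.ncard)
/-- `π` is a strict tableau with filling `[n]` and shape contained in the rectangle
with `m` rows and `n` columns: entries lie in `{1, …, n}` and each `v ∈ [n]` appears
in exactly one column. -/
def IsStrictTableau (π : PlanePartition) (n m : ℕ) : Prop :=
  π.RowsLE m ∧ π.ColsLE n ∧ π.EntriesLE n ∧
    ∀ v, 1 ≤ v → v ≤ n → π.colCount v = 1


namespace PlanePartition

lemma ext' {π ρ : PlanePartition} (h : π.entry = ρ.entry) : π = ρ := by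
  cases π; cases ρ; simpa using h

lemma entry_anti_row (π : PlanePartition) (j : ℕ) : Antitone (fun i => π.entry i j) :=
  antitone_nat_of_succ_le (fun i => π.col_decr i j)

lemma entry_anti_col (π : PlanePartition) (i : ℕ) : Antitone (fun j => π.entry i j) :=
  antitone_nat_of_succ_le (fun j => π.row_decr i j)

/-- subtract 1 from every entry. -/
def peel (π : PlanePartition) : PlanePartition where
  entry i j := π.entry i j - 1
  row_decr i j := Nat.sub_le_sub_right (π.row_decr i j) 1
  col_decr i j := Nat.sub_le_sub_right (π.col_decr i j) 1
  finite_support := π.finite_support.subset (by intro p hp; simp only [Set.mem_setOf_eq] at *; omega)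

/-- insert the value 1 into the leftmost column whose height is at most `b`,
filling it up to row `b` (0-indexed), after shifting all entries up by 1. -/
noncomputable def insert1 (π : PlanePartition) (b : ℕ) : PlanePartition where
  entry i j :=
    if π.entry i j ≠ 0 then π.entry i j + 1
    else if j = sInf {j | π.entry b j = 0} ∧ i ≤ b then 1 else 0
  row_decr i j := by
    have hrow := π.row_decr i j
    by_cases hc : j + 1 = sInf {j | π.entry b j = 0} ∧ i ≤ b
    · have hb : π.entry b j ≠ 0 := fun h0 => Nat.notMem_of_lt_sInf (s := {j | π.entry b j = 0}) (by omega) h0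
      have hib : π.entry b j ≤ π.entry i j := π.entry_anti_row j hc.2
      split_ifs <;> omega
    · split_ifs <;> omega
  col_decr i j := by
    have hcol := π.col_decr i j
    by_cases hc : j = sInf {j | π.entry b j = 0} ∧ i + 1 ≤ b
    · have h2 : j = sInf {j | π.entry b j = 0} ∧ i ≤ b := ⟨hc.1, by omega⟩
      split_ifs <;> omega
    · split_ifs <;> omega
  finite_support := by
    apply Set.Finite.subset
      (π.finite_support.union ((Set.finite_Iic b).prod (Set.finite_singleton
        (sInf {j | π.entry b j = 0}))))
    intro p hp
    simp only [Set.mem_setOf_eq, Set.mem_union, Set.mem_prod, Set.mem_Iic,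
      Set.mem_singleton_iff] at hp ⊢
    by_cases h : π.entry p.1 p.2 = 0
    · right
      simp only [h, ne_eq, not_true_eq_false, if_false] at hp
      split at hp
      · next hcond => exact ⟨hcond.2, hcond.1⟩
      · exact absurd rfl hp
    · left; exact h

@[simp] lemma insert1_entry (π : PlanePartition) (b i j : ℕ) :
    (π.insert1 b).entry i j =
      if π.entry i j ≠ 0 then π.entry i j + 1
      else if j = sInf {j | π.entry b j = 0} ∧ i ≤ b then 1 else 0 := rfl

@[simp] lemma peel_entry (π : PlanePartition) (i j : ℕ) :
    π.peel.entry i j = π.entry i j - 1 := rfl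

/-- the column containing the value 1. -/
noncomputable def col1 (π : PlanePartition) : ℕ := sInf {j | ∃ i, π.entry i j = 1}

/-- the bottom row (0-indexed) of the column containing the value 1. -/
noncomputable def bot1 (π : PlanePartition) : ℕ := sInf {i | π.entry i (π.col1) = 0} - 1

end PlanePartition

section StrictTableau

open PlanePartition

variable {n m : ℕ}

lemma one_set_eq {π : PlanePartition} (h : IsStrictTableau π (n + 1) m) :
    {j | ∃ i, π.entry i j = 1} = {π.col1} := by
  obtain ⟨a, ha⟩ := Set.ncard_eq_one.mp (h.2.2.2 1 le_rfl (by omega))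
  have : π.col1 = a := by rw [col1, ha, csInf_singleton]
  rw [this, ha]

lemma exists_one {π : PlanePartition} (h : IsStrictTableau π (n + 1) m) :
    ∃ i, π.entry i π.col1 = 1 := by
  have : π.col1 ∈ {j | ∃ i, π.entry i j = 1} := by rw [one_set_eq h]; rfl
  exact this

lemma eq_col1_of_one {π : PlanePartition} (h : IsStrictTableau π (n + 1) m)
    {i j : ℕ} (hij : π.entry i j = 1) : j = π.col1 := by
  have : j ∈ {j | ∃ i, π.entry i j = 1} := ⟨i, hij⟩
  rw [one_set_eq h] at this
  exact this

lemma zeroset_nonempty {π : PlanePartition} (h : IsStrictTableau π (n + 1) m) :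
    {i | π.entry i π.col1 = 0}.Nonempty :=
  ⟨m, h.1 m _ le_rfl⟩

lemma entry_col1_zero_iff {π : PlanePartition} (h : IsStrictTableau π (n + 1) m) (i : ℕ) :
    π.entry i π.col1 = 0 ↔ sInf {i | π.entry i π.col1 = 0} ≤ i := by
  constructor
  · intro h0
    exact Nat.sInf_le h0
  · intro hle
    have h1 : π.entry (sInf {i | π.entry i π.col1 = 0}) π.col1 = 0 :=
      Nat.sInf_mem (zeroset_nonempty h)
    have h2 : π.entry i π.col1 ≤ π.entry (sInf {i | π.entry i π.col1 = 0}) π.col1 :=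
      π.entry_anti_row π.col1 hle
    omega

lemma sInf_zeroset_pos {π : PlanePartition} (h : IsStrictTableau π (n + 1) m) :
    0 < sInf {i | π.entry i π.col1 = 0} := by
  obtain ⟨i, hi⟩ := exists_one h
  by_contra h0
  have : π.entry 0 π.col1 = 0 := (entry_col1_zero_iff h 0).mpr (by omega)
  have h2 : π.entry i π.col1 ≤ π.entry 0 π.col1 := π.entry_anti_row π.col1 (Nat.zero_le i)
  omega

lemma entry_bot1 {π : PlanePartition} (h : IsStrictTableau π (n + 1) m) :
    π.entry π.bot1 π.col1 = 1 := by
  obtain ⟨i, hi⟩ := exists_one h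
  have hpos := sInf_zeroset_pos h
  have hb : ¬ π.entry π.bot1 π.col1 = 0 := by
    rw [entry_col1_zero_iff h]; unfold PlanePartition.bot1; omega
  have hile : i < sInf {i | π.entry i π.col1 = 0} := by
    by_contra hle
    have := (entry_col1_zero_iff h i).mpr (by omega)
    omega
  have : π.entry π.bot1 π.col1 ≤ π.entry i π.col1 := by
    apply π.entry_anti_row π.col1
    unfold PlanePartition.bot1; omega
  omega

lemma bot1_lt {π : PlanePartition} (h : IsStrictTableau π (n + 1) m) : π.bot1 < m := by
  by_contra hle
  have := h.1 π.bot1 π.col1 (by omega)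
  have := entry_bot1 h
  omega

lemma bot1_iff {π : PlanePartition} (h : IsStrictTableau π (n + 1) m) (i : ℕ) :
    π.entry i π.col1 = 0 ↔ π.bot1 < i := by
  rw [entry_col1_zero_iff h]
  have := sInf_zeroset_pos h
  unfold PlanePartition.bot1
  omega

lemma peel_isStrictTableau {π : PlanePartition} (h : IsStrictTableau π (n + 1) m) :
    IsStrictTableau π.peel n m := by
  obtain ⟨hr, hc, he, hcc⟩ := h
  have key : ∀ i j, n ≤ j → π.entry i j ≤ 1 := by
    intro i j hj
    by_contra hgt
    -- pigeonhole: row 0 has n+1 entries in {2, ..., n+1}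
    have htop : ∀ k, k ≤ n → 2 ≤ π.entry 0 k ∧ π.entry 0 k ≤ n + 1 := by
      intro k hk
      refine ⟨?_, he 0 k⟩
      have h1 : π.entry i j ≤ π.entry 0 j := π.entry_anti_row j (Nat.zero_le i)
      have h2 : π.entry 0 j ≤ π.entry 0 k := π.entry_anti_col 0 (le_trans hk hj)
      omega
    have hmap : ∀ k : Fin (n + 1), (⟨π.entry 0 k - 2, by
        have := htop k (by omega); omega⟩ : Fin n) = ⟨π.entry 0 k - 2, by
        have := htop k (by omega); omega⟩ := fun _ => rfl
    have : ¬ Function.Injective (fun k : Fin (n + 1) =>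
        (⟨π.entry 0 k - 2, by have := htop k (by omega); omega⟩ : Fin n)) := by
      intro hinj
      have := Fintype.card_le_of_injective _ hinj
      simp at this
    rw [Function.not_injective_iff] at this
    obtain ⟨k1, k2, heq, hne⟩ := this
    have hval : π.entry 0 k1 = π.entry 0 k2 := by
      have h1 := htop k1 (by omega)
      have h2 := htop k2 (by omega)
      have := Fin.mk.injEq (π.entry 0 k1 - 2) _ (π.entry 0 k2 - 2) _ ▸ heq
      simp only [Fin.mk.injEq] at heq
      omega
    set v := π.entry 0 k1 with hv
    have hvb := htop k1 (by omega)
    have hone := hcc v (by omega) (by omega)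
    obtain ⟨a, ha⟩ := Set.ncard_eq_one.mp hone
    have hk1 : (k1 : ℕ) ∈ {j | ∃ i, π.entry i j = v} := ⟨0, rfl⟩
    have hk2 : (k2 : ℕ) ∈ {j | ∃ i, π.entry i j = v} := ⟨0, hval.symm⟩
    rw [ha] at hk1 hk2
    exact hne (Fin.ext (by simp only [Set.mem_singleton_iff] at hk1 hk2; omega))
  refine ⟨fun i j hi => by simp [hr i j hi], fun i j hj => by
      have := key i j hj; simp only [peel_entry]; omega,
    fun i j => by have := he i j; simp only [peel_entry]; omega, ?_⟩
  intro v hv1 hvn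
  have : {j | ∃ i, π.peel.entry i j = v} = {j | ∃ i, π.entry i j = v + 1} := by
    ext j
    simp only [Set.mem_setOf_eq, peel_entry]
    constructor
    · rintro ⟨i, hi⟩; exact ⟨i, by omega⟩
    · rintro ⟨i, hi⟩; exact ⟨i, by omega⟩
  rw [PlanePartition.colCount, this]
  exact hcc (v + 1) (by omega) (by omega)

lemma insert1_isStrictTableau {π : PlanePartition} (h : IsStrictTableau π n m)
    {b : ℕ} (hb : b < m) : IsStrictTableau (π.insert1 b) (n + 1) m := by
  obtain ⟨hr, hc, he, hcc⟩ := h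
  set J := sInf {j | π.entry b j = 0} with hJ
  have hJle : J ≤ n := Nat.sInf_le (hc b n le_rfl)
  have hJmem : π.entry b J = 0 := Nat.sInf_mem (⟨n, hc b n le_rfl⟩ : {j | π.entry b j = 0}.Nonempty)
  have hone : {j | ∃ i, (π.insert1 b).entry i j = 1} = {J} := by
    ext j
    simp only [Set.mem_setOf_eq, Set.mem_singleton_iff, insert1_entry, ← hJ]
    constructor
    · rintro ⟨i, hi⟩
      split at hi
      · omega
      · split at hi
        · tauto
        · omega
    · rintro rfl
      exact ⟨b, by simp [hJmem]⟩
  refine ⟨?_, ?_, ?_, ?_⟩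
  · intro i j hi
    simp only [insert1_entry, hr i j hi]
    have : ¬ i ≤ b := by omega
    simp [this]
  · intro i j hj
    have h0 : π.entry i j = 0 := hc i j (by omega)
    have : j ≠ J := by omega
    simp [insert1_entry, h0, this]
    exact fun h' => absurd h' this
  · intro i j
    simp only [insert1_entry]
    have := he i j
    split
    · omega
    · split <;> omega
  · intro v hv1 hvn
    rcases Nat.lt_or_ge v 2 with hv | hv
    · have : v = 1 := by omega
      subst this
      rw [PlanePartition.colCount, hone, Set.ncard_singleton]
    · have : {j | ∃ i, (π.insert1 b).entry i j = v} = {j | ∃ i, π.entry i j = v - 1} := by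
        ext j
        simp only [Set.mem_setOf_eq, insert1_entry]
        constructor
        · rintro ⟨i, hi⟩
          refine ⟨i, ?_⟩
          split at hi
          · omega
          · split at hi <;> omega
        · rintro ⟨i, hi⟩
          refine ⟨i, ?_⟩
          have : π.entry i j ≠ 0 := by omega
          simp [this]; omega
      rw [PlanePartition.colCount, this]
      exact hcc (v - 1) (by omega) (by omega)

lemma insert1_one_set {π : PlanePartition} (h : IsStrictTableau π n m)
    {b : ℕ} (hb : b < m) :
    {j | ∃ i, (π.insert1 b).entry i j = 1} = {sInf {j | π.entry b j = 0}} := by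
  obtain ⟨hr, hc, he, hcc⟩ := h
  have hJmem : π.entry b (sInf {j | π.entry b j = 0}) = 0 := Nat.sInf_mem (⟨n, hc b n le_rfl⟩ : {j | π.entry b j = 0}.Nonempty)
  ext j
  simp only [Set.mem_setOf_eq, Set.mem_singleton_iff, insert1_entry]
  constructor
  · rintro ⟨i, hi⟩
    split at hi
    · omega
    · split at hi
      · tauto
      · omega
  · rintro rfl
    exact ⟨b, by simp [hJmem]⟩

lemma roundtrip1 {π : PlanePartition} (h : IsStrictTableau π (n + 1) m) :
    π.peel.insert1 π.bot1 = π := by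
  have hJ : sInf {j | π.entry π.bot1 j - 1 = 0} = π.col1 := by
    have hmem : π.entry π.bot1 π.col1 - 1 = 0 := by
      simp [entry_bot1 h]
    have hlt : ∀ j < π.col1, π.entry π.bot1 j - 1 ≠ 0 := by
      intro j hj
      have h1 : π.entry π.bot1 π.col1 ≤ π.entry π.bot1 j := π.entry_anti_col _ (by omega)
      have h2 := entry_bot1 h
      have h3 : π.entry π.bot1 j ≠ 1 := fun heq => by
        have := eq_col1_of_one h heq; omega
      omega
    refine le_antisymm (Nat.sInf_le hmem) ?_
    by_contra hlt'
    have := Nat.sInf_mem (⟨π.col1, hmem⟩ : {j | π.entry π.bot1 j - 1 = 0}.Nonempty)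
    exact hlt _ (by omega) this
  apply PlanePartition.ext'
  funext i j
  simp only [insert1_entry, peel_entry, hJ]
  rcases Nat.lt_or_ge (π.entry i j) 2 with hlt | hge
  · rcases Nat.eq_or_lt_of_le (Nat.lt_succ_iff.mp hlt) with h1 | h0
    · -- entry = 1
      have hj : j = π.col1 := eq_col1_of_one h h1
      have hib : i ≤ π.bot1 := by
        have := (bot1_iff h i).not
        rw [hj] at h1
        omega
      subst hj
      simp [h1, hib]
    · -- entry = 0
      have h0' : π.entry i j = 0 := by omega
      simp only [h0', Nat.zero_sub, ne_eq, not_true_eq_false, if_false, not_false_eq_true]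
      split
      · next hcond =>
        exfalso
        have h0'' : π.entry i π.col1 = 0 := by rw [← hcond.1]; exact h0'
        have := (bot1_iff h i).mp h0''
        omega
      · rfl
  · have : π.entry i j - 1 ≠ 0 := by omega
    simp only [this, if_true, ne_eq, not_false_eq_true]
    omega

lemma roundtrip2_pp {π : PlanePartition} (b : ℕ) :
    (π.insert1 b).peel = π := by
  apply PlanePartition.ext'
  funext i j
  simp only [peel_entry, insert1_entry]
  split
  · omega
  · split <;> omega

lemma roundtrip2_bot {π : PlanePartition} (h : IsStrictTableau π n m)
    {b : ℕ} (hb : b < m) : (π.insert1 b).bot1 = b := by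
  have hstep := insert1_isStrictTableau h hb
  set J := sInf {j | π.entry b j = 0} with hJdef
  have hcol : (π.insert1 b).col1 = J := by
    rw [PlanePartition.col1, insert1_one_set h hb, csInf_singleton]
  have hJmem : π.entry b J = 0 := Nat.sInf_mem (⟨n, h.2.1 b n le_rfl⟩ : {j | π.entry b j = 0}.Nonempty)
  have hzero : {i | (π.insert1 b).entry i (π.insert1 b).col1 = 0} = {i | b + 1 ≤ i} := by
    ext i
    simp only [Set.mem_setOf_eq, hcol, insert1_entry, ← hJdef]
    constructor
    · intro h0
      by_contra hle
      have : i ≤ b := by omega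
      split at h0
      · omega
      · simp [this] at h0
    · intro hgt
      have h0 : π.entry i J = 0 := by
        have hmono : π.entry i J ≤ π.entry b J := π.entry_anti_row J (by omega)
        omega
      have : ¬ i ≤ b := by omega
      simp [h0, this]
  rw [PlanePartition.bot1, hzero]
  have : sInf {i | b + 1 ≤ i} = b + 1 := by
    refine le_antisymm (Nat.sInf_le (by simp)) ?_
    by_contra hlt
    have := Nat.sInf_mem (⟨b + 1, by simp⟩ : {i | b + 1 ≤ i}.Nonempty)
    simp only [Set.mem_setOf_eq] at this
    omega
  omega

/-- the zero plane partition. -/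
def zeroPP : PlanePartition where
  entry _ _ := 0
  row_decr _ _ := le_rfl
  col_decr _ _ := le_rfl
  finite_support := by simp

noncomputable def stepEquiv (n m : ℕ) :
    {π : PlanePartition // IsStrictTableau π (n + 1) m} ≃
      {π : PlanePartition // IsStrictTableau π n m} × Fin m where
  toFun := fun ⟨π, h⟩ => (⟨π.peel, peel_isStrictTableau h⟩, ⟨π.bot1, bot1_lt h⟩)
  invFun := fun ⟨⟨π, h⟩, b⟩ => ⟨π.insert1 b, insert1_isStrictTableau h b.isLt⟩
  left_inv := fun ⟨π, h⟩ => Subtype.ext (roundtrip1 h)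
  right_inv := fun ⟨⟨π, h⟩, b⟩ => by
    refine Prod.ext (Subtype.ext (roundtrip2_pp b)) (Fin.ext ?_)
    exact roundtrip2_bot h b.isLt

end StrictTableau

/-- There is a bijection between words of length `n` over the
alphabet `[m]` and strict tableaux with filling `[n]` and shape contained in the
`n × m` rectangle. -/
theorem words_equiv_strict_tableaux (n m : ℕ) :
    Nonempty ((Fin n → Fin m) ≃ {π : PlanePartition // IsStrictTableau π n m}) := by
  induction n with
  | zero =>
    have h0 : IsStrictTableau zeroPP 0 m :=
      ⟨fun _ _ _ => rfl, fun _ _ _ => rfl, fun _ _ => le_rfl, fun v h1 h2 => by omega⟩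
    exact ⟨{
      toFun := fun _ => ⟨zeroPP, h0⟩
      invFun := fun _ => fun i => i.elim0
      left_inv := fun f => funext fun i => i.elim0
      right_inv := fun ⟨π, h⟩ => Subtype.ext (PlanePartition.ext'
        (funext fun i => funext fun j => (h.2.1 i j (Nat.zero_le j)).symm)) }⟩
  | succ k ih =>
    obtain ⟨e⟩ := ih
    exact ⟨(Fin.consEquiv (fun _ => Fin m)).symm.trans (((Equiv.prodComm _ _).trans
      (e.prodCongr (Equiv.refl (Fin m)))).trans (stepEquiv k m).symm)⟩
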